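/- Let n ≥ 2 and 2 ≤ q < ∞. Let (c^S_j)_{j=1,…,q} ⊂ ℝⁿ × ℝ and (k^S_j)_{j=1,…,q} ⊂ ℝ, write c^S_j = (c̲_j, (c₀)_j), and define c^H_j = (c̲_j, −k^S_j) ∈ ℝⁿ × ℝ and k^H_j = −(c₀)_j. Then for every i ∈ {1,…,q}: {y ∈ ℍⁿ : π_ℍ(y) lies in {p ∈ Sⁿ₊ : ⟨c^S_i, p⟩ + k^S_i < ⟨c^S_j, p⟩ + k^S_j for all j ≠ i}} = {y ∈ ℍⁿ : ⟨c^H_i, y⟩₁ − k^H_i < ⟨c^H_j, y⟩₁ − k^H_j for all j ≠ i}. -/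

import Mathlib

open scoped RealInnerProductSpace

/-- The Minkowski inner product on `ℝⁿ × ℝ ≅ ℝ^{n,1}`:
`⟨x, y⟩₁ = ⟨x̲, y̲⟩ - x₀ y₀`. -/
noncomputable def minkInner {n : ℕ} (x y : EuclideanSpace ℝ (Fin n) × ℝ) : ℝ :=
  ⟪x.1, y.1⟫ - x.2 * y.2

/-- The Euclidean inner product on `ℝⁿ × ℝ ≅ ℝ^{n+1}`. -/
noncomputable def euclInner {n : ℕ} (x y : EuclideanSpace ℝ (Fin n) × ℝ) : ℝ :=
  ⟪x.1, y.1⟫ + x.2 * y.2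

/-- The hyperboloid model of hyperbolic space:
`ℍⁿ = {y : ⟨y,y⟩₁ = -1, y₀ > 0}`. -/
noncomputable def Hyperboloid (n : ℕ) : Set (EuclideanSpace ℝ (Fin n) × ℝ) :=
  {y | minkInner y y = -1 ∧ 0 < y.2}

/-- The stereographic projection `π_ℍ(y) = (y̲, 1)/y₀`. -/
noncomputable def stereoH {n : ℕ} (y : EuclideanSpace ℝ (Fin n) × ℝ) :
    EuclideanSpace ℝ (Fin n) × ℝ := (y.2⁻¹ • y.1, y.2⁻¹)

/-- The unit sphere `Sⁿ ⊂ ℝⁿ × ℝ ≅ ℝ^{n+1}` (described via the squared norm). -/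
noncomputable def UnitSphere (n : ℕ) : Set (EuclideanSpace ℝ (Fin n) × ℝ) :=
  {p | ‖p.1‖ ^ 2 + p.2 ^ 2 = 1}

/-- The stereographic projection
`π_ℝ(x) = (2x/(|x|²+1), (|x|²−1)/(|x|²+1))`. -/
noncomputable def stereoR {n : ℕ} (x : EuclideanSpace ℝ (Fin n)) :
    EuclideanSpace ℝ (Fin n) × ℝ :=
  ((‖x‖ ^ 2 + 1)⁻¹ • ((2 : ℝ) • x), (‖x‖ ^ 2 - 1) / (‖x‖ ^ 2 + 1))

/-- with `c^H_j = (c̲_j, -k^S_j)` and `k^H_j = -(c₀)_j`, the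
preimage under `π_ℍ` of the spherical Voronoi cell
`{p ∈ Sⁿ₊ : ⟨c^S_i, p⟩ + k^S_i < ⟨c^S_j, p⟩ + k^S_j ∀ j ≠ i}` equals
`{y ∈ ℍⁿ : ⟨c^H_i, y⟩₁ - k^H_i < ⟨c^H_j, y⟩₁ - k^H_j ∀ j ≠ i}`. -/
theorem statement7 (n : ℕ) (hn : 2 ≤ n) (q : ℕ) (hq : 2 ≤ q)
    (c : Fin q → EuclideanSpace ℝ (Fin n)) (c0 k : Fin q → ℝ) (i : Fin q) :
    {y | y ∈ Hyperboloid n ∧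
        stereoH y ∈ {p : EuclideanSpace ℝ (Fin n) × ℝ |
          p ∈ UnitSphere n ∧ 0 < p.2 ∧
          ∀ j, j ≠ i →
            euclInner (c i, c0 i) p + k i < euclInner (c j, c0 j) p + k j}}
      = {y | y ∈ Hyperboloid n ∧
          ∀ j, j ≠ i →
            minkInner (c i, -(k i)) y - (-(c0 i))
              < minkInner (c j, -(k j)) y - (-(c0 j))} := by
  have aux : ∀ (t A B K A' B' K' : ℝ), 0 < t →
      (t⁻¹ * A + B * t⁻¹ + K < t⁻¹ * A' + B' * t⁻¹ + K' ↔
        A - -K * t - -B < A' - -K' * t - -B') := by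
    intro t A B K A' B' K' ht
    rw [show t⁻¹ * A + B * t⁻¹ + K = (A + K * t + B) / t by field_simp; ring,
        show t⁻¹ * A' + B' * t⁻¹ + K' = (A' + K' * t + B') / t by field_simp; ring,
        div_lt_div_iff_of_pos_right ht]
    constructor <;> intro h <;> linarith
  ext y
  simp only [Set.mem_setOf_eq, Hyperboloid, stereoH, UnitSphere, euclInner, minkInner,
    real_inner_smul_right, real_inner_self_eq_norm_sq]
  constructor
  · rintro ⟨⟨h1, h2⟩, _, _, h3⟩
    exact ⟨⟨h1, h2⟩, fun j hj => (aux _ _ _ _ _ _ _ h2).mp (h3 j hj)⟩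
  · rintro ⟨⟨h1, h2⟩, h3⟩
    have hn2 : ‖y.1‖ ^ 2 = y.2 ^ 2 - 1 := by nlinarith
    refine ⟨⟨h1, h2⟩, ?_, inv_pos.mpr h2, fun j hj => (aux _ _ _ _ _ _ _ h2).mpr (h3 j hj)⟩
    rw [norm_smul, mul_pow, hn2, Real.norm_eq_abs, abs_of_pos (inv_pos.mpr h2)]
    field_simp
    ring
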